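/- Let G be a pseudocentral group, i.e. P(G) = G. Then G' = G'' (the commutator subgroup equals the second derived subgroup, i.e. derivedSeries G 1 = derivedSeries G 2) and Z₂(G) = Z(G) (the second term of the upper central series equals the centre). Consequently, every solvable pseudocentral group is abelian. -/

import Mathlib

open Subgroup Function
open scoped commutatorElement

/-- The pseudocentre of a group `G`: the intersection of the normal closures of the
centralizers of the elements of `G`. -/
def P (G : Type*) [Group G] : Subgroup G :=
  ⨅ g : G, Subgroup.normalClosure ↑(Subgroup.centralizer {g})

section Aux

variable {G : Type*} [Group G]

lemma pc_forall (h : P G = ⊤) (g : G) :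
    Subgroup.normalClosure ((Subgroup.centralizer ({g} : Set G) : Subgroup G) : Set G) = ⊤ :=
  eq_top_iff.mpr (le_trans h.ge (iInf_le _ g))

/-- If all commutators with `x` are central, and the normal closure of every centralizer is
the whole group, then `x` is central. -/
lemma mem_center_of_pc (hpc : ∀ g : G, Subgroup.normalClosure ((Subgroup.centralizer ({g} : Set G) : Subgroup G) : Set G) = ⊤)
    (x : G) (hx : ∀ a : G, x * a * x⁻¹ * a⁻¹ ∈ Subgroup.center G) : x ∈ Subgroup.center G := by
  let φ : G →* Subgroup.center G :=
  { toFun := fun a => ⟨x * a * x⁻¹ * a⁻¹, hx a⟩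
    map_one' := by ext; simp
    map_mul' := by
      intro a b
      ext
      show x * (a * b) * x⁻¹ * (a * b)⁻¹ = (x * a * x⁻¹ * a⁻¹) * (x * b * x⁻¹ * b⁻¹)
      have h2 := (Subgroup.mem_center_iff.mp (hx b)) a⁻¹
      calc x * (a * b) * x⁻¹ * (a * b)⁻¹
          = x * a * x⁻¹ * ((x * b * x⁻¹ * b⁻¹) * a⁻¹) := by group
        _ = x * a * x⁻¹ * (a⁻¹ * (x * b * x⁻¹ * b⁻¹)) := by rw [h2]
        _ = (x * a * x⁻¹ * a⁻¹) * (x * b * x⁻¹ * b⁻¹) := by group }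
  have hker : Subgroup.centralizer ({x} : Set G) ≤ φ.ker := by
    intro a ha
    have hax : a * x = x * a := Subgroup.mem_centralizer_singleton_iff.mp ha
    rw [MonoidHom.mem_ker]
    ext
    show x * a * x⁻¹ * a⁻¹ = 1
    rw [← hax]; group
  have htop : φ.ker = ⊤ :=
    eq_top_iff.mpr ((hpc x).ge.trans (Subgroup.normalClosure_le_normal hker))
  rw [Subgroup.mem_center_iff]
  intro a
  have hk : a ∈ φ.ker := by rw [htop]; trivial
  have h1 : x * a * x⁻¹ * a⁻¹ = 1 := congrArg Subtype.val (MonoidHom.mem_ker.mp hk)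
  have h2 : (x * a) * (a * x)⁻¹ = 1 := by rw [mul_inv_rev, ← mul_assoc]; exact h1
  exact (mul_inv_eq_one.mp h2).symm

/-- Pseudocentrality passes to surjective images. -/
lemma pc_of_surjective {H : Type*} [Group H] (f : G →* H) (hf : Function.Surjective f)
    (hpc : ∀ g : G, Subgroup.normalClosure ((Subgroup.centralizer ({g} : Set G) : Subgroup G) : Set G) = ⊤)
    (h : H) : Subgroup.normalClosure ((Subgroup.centralizer ({h} : Set H) : Subgroup H) : Set H) = ⊤ := by
  obtain ⟨g, rfl⟩ := hf h
  have hmap : Subgroup.map f (Subgroup.normalClosure ((Subgroup.centralizer ({g} : Set G) : Subgroup G) : Set G))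
      ≤ Subgroup.normalClosure ((Subgroup.centralizer ({f g} : Set H) : Subgroup H) : Set H) := by
    rw [Subgroup.map_normalClosure _ f hf]
    apply Subgroup.normalClosure_mono
    rintro - ⟨a, ha, rfl⟩
    have hag : a * g = g * a := Subgroup.mem_centralizer_singleton_iff.mp ha
    exact Subgroup.mem_centralizer_singleton_iff.mpr (by rw [← map_mul, hag, map_mul])
  rw [hpc g, Subgroup.map_top_of_surjective f hf] at hmap
  exact eq_top_iff.mpr hmap

/-- A metabelian pseudocentral group is abelian. -/
lemma center_eq_top_of_metabelian_pc
    (hpc : ∀ g : G, Subgroup.normalClosure ((Subgroup.centralizer ({g} : Set G) : Subgroup G) : Set G) = ⊤)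
    (hmet : ∀ a ∈ commutator G, ∀ b ∈ commutator G, a * b = b * a)
    (x : G) : x ∈ Subgroup.center G := by
  have hcen : commutator G ≤ Subgroup.center G := by
    intro d hd
    have hnorm : (Subgroup.centralizer ({d} : Set G)).Normal := by
      constructor
      intro a ha g
      have had : a * d = d * a := Subgroup.mem_centralizer_singleton_iff.mp ha
      have hc : ⁅g, a⁆ ∈ commutator G := by
        rw [_root_.commutator_def]
        exact Subgroup.commutator_mem_commutator (Subgroup.mem_top g) (Subgroup.mem_top a)
      have hdc : ⁅g, a⁆ * d = d * ⁅g, a⁆ := hmet _ hc _ hd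
      apply Subgroup.mem_centralizer_singleton_iff.mpr
      have hga : g * a * g⁻¹ = ⁅g, a⁆ * a := by group
      calc (g * a * g⁻¹) * d = ⁅g, a⁆ * a * d := by rw [hga]
        _ = ⁅g, a⁆ * (d * a) := by rw [mul_assoc, had]
        _ = d * (⁅g, a⁆ * a) := by rw [← mul_assoc, hdc, mul_assoc]
        _ = d * (g * a * g⁻¹) := by rw [← hga]
    have : Subgroup.centralizer ({d} : Set G) = ⊤ := by
      rw [← Subgroup.normalClosure_eq_self (Subgroup.centralizer ({d} : Set G)), hpc d]
    rw [Subgroup.mem_center_iff]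
    intro a
    have ha : a ∈ Subgroup.centralizer ({d} : Set G) := by rw [this]; trivial
    exact Subgroup.mem_centralizer_singleton_iff.mp ha
  apply mem_center_of_pc hpc
  intro a
  apply hcen
  have : x * a * x⁻¹ * a⁻¹ = ⁅x, a⁆ := by group
  rw [this, _root_.commutator_def]
  exact commutator_mem_commutator (Subgroup.mem_top x) (Subgroup.mem_top a)

end Aux

/-- In a pseudocentral group, `G' = G''`, `Z₂(G) = Z(G)`, and hence every solvable
pseudocentral group is abelian. -/
theorem pseudocentral_structure {G : Type*} [Group G] (h : P G = ⊤) :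
    derivedSeries G 1 = derivedSeries G 2 ∧
    _root_.upperCentralSeries G 2 = Subgroup.center G ∧
    (IsSolvable G → ∀ a b : G, a * b = b * a) := by
  have hpc := pc_forall h
  -- Part 1 : G' = G''
  have hder : derivedSeries G 1 = derivedSeries G 2 := by
    apply le_antisymm
    · set N := derivedSeries G 2 with hN
      haveI : N.Normal := derivedSeries_normal G 2
      set f := QuotientGroup.mk' N with hf
      have hfs : Function.Surjective f := QuotientGroup.mk'_surjective N
      have hpcH := pc_of_surjective f hfs hpc
      have hmet : ∀ a ∈ commutator (G ⧸ N), ∀ b ∈ commutator (G ⧸ N), a * b = b * a := by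
        intro a ha b hb
        have ha' : a ∈ derivedSeries (G ⧸ N) 1 := by rwa [derivedSeries_one]
        have hb' : b ∈ derivedSeries (G ⧸ N) 1 := by rwa [derivedSeries_one]
        have hmem : ⁅a, b⁆ ∈ derivedSeries (G ⧸ N) 2 := by
          rw [derivedSeries_succ]
          exact Subgroup.commutator_mem_commutator ha' hb'
        rw [← map_derivedSeries_eq hfs 2] at hmem
        obtain ⟨g, hg, hfg⟩ := hmem
        have : f g = 1 := (QuotientGroup.eq_one_iff g).mpr hg
        rw [← commutatorElement_eq_one_iff_mul_comm, ← hfg, this]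
      have habel : ∀ x : G ⧸ N, x ∈ Subgroup.center (G ⧸ N) :=
        center_eq_top_of_metabelian_pc hpcH hmet
      rw [derivedSeries_one, _root_.commutator_def, Subgroup.commutator_le]
      intro a _ b _
      have : f ⁅a, b⁆ = 1 := by
        rw [map_commutatorElement]
        exact commutatorElement_eq_one_iff_mul_comm.mpr
          ((Subgroup.mem_center_iff.mp (habel (f a))) (f b)).symm
      exact (QuotientGroup.eq_one_iff _).mp this
    · rw [derivedSeries_succ, Subgroup.commutator_le]
      intro g hg h' hh'
      exact (derivedSeries G 1).mul_mem (Subgroup.mul_mem _ (Subgroup.mul_mem _ hg hh')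
        (Subgroup.inv_mem _ hg)) (Subgroup.inv_mem _ hh')
  refine ⟨hder, ?_, ?_⟩
  -- Part 2 : Z₂ = Z
  · apply le_antisymm
    · intro x hx
      apply mem_center_of_pc hpc
      intro a
      have := Subgroup.mem_upperCentralSeries_succ_iff.mp hx a
      rwa [Subgroup.upperCentralSeries_one] at this
    · intro x hx
      apply Subgroup.mem_upperCentralSeries_succ_iff.mpr
      intro y
      rw [Subgroup.upperCentralSeries_one]
      have : x * y = y * x := ((Subgroup.mem_center_iff.mp hx) y).symm
      have h1 : x * y * x⁻¹ * y⁻¹ = 1 := by rw [this]; group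
      rw [commutatorElement_def, h1]; exact Subgroup.one_mem _
  -- Part 3 : solvable → abelian
  · intro hs a b
    obtain ⟨n, hn⟩ := hs.solvable
    have key : ∀ m : ℕ, derivedSeries G (m + 1) = derivedSeries G 1 := by
      intro m
      induction m with
      | zero => rfl
      | succ k ih => rw [derivedSeries_succ, ih, ← derivedSeries_succ, ← hder]
    have hbot : derivedSeries G 1 = ⊥ := by
      have h1 : derivedSeries G (n + 1) ≤ derivedSeries G n := by
        rw [derivedSeries_succ, Subgroup.commutator_le]
        intro g hg h' hh'
        exact (derivedSeries G n).mul_mem (Subgroup.mul_mem _ (Subgroup.mul_mem _ hg hh')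
          (Subgroup.inv_mem _ hg)) (Subgroup.inv_mem _ hh')
      rw [← key n]
      exact le_bot_iff.mp (hn ▸ h1)
    have : ⁅a, b⁆ ∈ derivedSeries G 1 := by
      rw [derivedSeries_one, _root_.commutator_def]
      exact Subgroup.commutator_mem_commutator (Subgroup.mem_top a) (Subgroup.mem_top b)
    rw [hbot, Subgroup.mem_bot] at this
    exact commutatorElement_eq_one_iff_mul_comm.mp this
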